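/- Let D, D′ be graded division algebras, F and F′ graded flags on modules V, V′ with R = End_D F, R′ = End_{D′} F′, and let ψ : R → R′ be an isomorphism of graded algebras. If e ∈ R is a nonzero idempotent with e(V) = V_1 (the smallest nonzero term of F), then ψ(e)(V′) = V_1′ (the smallest nonzero term of F′). -/

import Mathlib

open MulOpposite

/-- A grading of a ring `D` by a group `G`. -/
structure RingGrading (G D : Type*) [Group G] [DecidableEq G] [Ring D] where
  comp : G → AddSubgroup D
  decomp : DirectSum.Decomposition comp
  mul_mem : ∀ {g h : G} {a b : D}, a ∈ comp g → b ∈ comp h → a * b ∈ comp (g * h)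
  one_mem : (1 : D) ∈ comp 1

/-- A graded ring is a graded division ring if every nonzero homogeneous element
is invertible. -/
def RingGrading.IsDivision {G D : Type*} [Group G] [DecidableEq G] [Ring D]
    (𝒟 : RingGrading G D) : Prop :=
  ∀ (g : G) (a : D), a ∈ 𝒟.comp g → a ≠ 0 → IsUnit a

/-- A grading of a right `D`-module `V` (modelled as a `Dᵐᵒᵖ`-module) compatible with
the grading `𝒟` of `D`. -/
structure ModuleGrading (G : Type*) [Group G] [DecidableEq G] {D : Type*} [Ring D]
    (𝒟 : RingGrading G D) (V : Type*) [AddCommGroup V] [Module Dᵐᵒᵖ V] where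
  comp : G → AddSubgroup V
  decomp : DirectSum.Decomposition comp
  smul_mem : ∀ {g h : G} {v : V} {d : D}, v ∈ comp g → d ∈ 𝒟.comp h → (op d) • v ∈ comp (g * h)

variable {G : Type*} [Group G] [DecidableEq G] {D : Type*} [Ring D] {𝒟 : RingGrading G D}
  {V : Type*} [AddCommGroup V] [Module Dᵐᵒᵖ V]

/-- A `D`-submodule `W` is homogeneous if it is the (direct) sum of its intersections
with the homogeneous components. -/
def ModuleGrading.IsHomog (𝒱 : ModuleGrading G 𝒟 V) (W : Submodule Dᵐᵒᵖ V) : Prop :=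
  W.toAddSubgroup = ⨆ g : G, (W.toAddSubgroup ⊓ 𝒱.comp g)

/-- A graded flag `0 = V₀ ⊂ V₁ ⊂ ⋯ ⊂ V_r = V` of homogeneous `D`-submodules of `V`
(the chain is constant equal to `⊤` from index `r` on). -/
structure GradedFlag (𝒱 : ModuleGrading G 𝒟 V) (r : ℕ) where
  mem : ℕ → Submodule Dᵐᵒᵖ V
  bot : mem 0 = ⊥
  strict : ∀ i < r, mem i < mem (i + 1)
  stable : ∀ i, r ≤ i → mem i = ⊤
  homog : ∀ i, 𝒱.IsHomog (mem i)

/-- The ring `End_D 𝓕` of `D`-linear endomorphisms of `V` preserving each member of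
the flag `F`, as a subring of `End_D V`. -/
def GradedFlag.flagEnd {𝒱 : ModuleGrading G 𝒟 V} {r : ℕ} (F : GradedFlag 𝒱 r) :
    Subring (Module.End Dᵐᵒᵖ V) where
  carrier := {f | ∀ i, ∀ v ∈ F.mem i, f v ∈ F.mem i}
  zero_mem' := by intro i v hv; simp
  one_mem' := by intro i v hv; simpa using hv
  add_mem' := by
    intro a b ha hb i v hv
    simpa [LinearMap.add_apply] using (F.mem i).add_mem (ha i v hv) (hb i v hv)
  neg_mem' := by
    intro a ha i v hv
    simpa [LinearMap.neg_apply] using (F.mem i).neg_mem (ha i v hv)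
  mul_mem' := by intro a b ha hb i v hv; exact ha i _ (hb i v hv)

/-- The degree-`τ` homogeneous component of `End_D V`: endomorphisms mapping `V_g`
into `V_{τg}` for every `g`. -/
def ModuleGrading.endComp (𝒱 : ModuleGrading G 𝒟 V) (τ : G) :
    AddSubgroup (Module.End Dᵐᵒᵖ V) where
  carrier := {f | ∀ (g : G), ∀ v ∈ 𝒱.comp g, f v ∈ 𝒱.comp (τ * g)}
  zero_mem' := by intro g v hv; simpa using (𝒱.comp _).zero_mem
  add_mem' := by
    intro a b ha hb g v hv
    simpa [LinearMap.add_apply] using (𝒱.comp _).add_mem (ha g v hv) (hb g v hv)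
  neg_mem' := by
    intro a ha g v hv
    simpa [LinearMap.neg_apply] using (𝒱.comp _).neg_mem (ha g v hv)

section Aux

open DirectSum

instance (𝒟 : RingGrading G D) : DirectSum.Decomposition 𝒟.comp := 𝒟.decomp

instance {𝒟 : RingGrading G D} (𝒱 : ModuleGrading G 𝒟 V) :
    DirectSum.Decomposition 𝒱.comp := 𝒱.decomp

variable {𝒱 : ModuleGrading G 𝒟 V}

lemma decompose_coe_add (𝒱 : ModuleGrading G 𝒟 V) (v w : V) (k : G) :
    (decompose 𝒱.comp (v + w) k : V) =
      (decompose 𝒱.comp v k : V) + (decompose 𝒱.comp w k : V) := by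
  rw [DirectSum.decompose_add, DirectSum.add_apply, AddSubgroup.coe_add]

lemma ModuleGrading.mem_of_forall_ne (𝒱 : ModuleGrading G 𝒟 V) {v : V} {g : G}
    (h : ∀ k, k ≠ g → (decompose 𝒱.comp v k : V) = 0) : v ∈ 𝒱.comp g := by
  classical
  rw [← DirectSum.sum_support_decompose 𝒱.comp v]
  refine AddSubgroup.sum_mem _ fun k _ => ?_
  by_cases hkg : k = g
  · subst hkg; exact SetLike.coe_mem _
  · rw [h k hkg]; exact zero_mem _

lemma ModuleGrading.IsHomog.component_mem {W : Submodule Dᵐᵒᵖ V} (hW : 𝒱.IsHomog W)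
    {v : V} (hv : v ∈ W) (k : G) : (decompose 𝒱.comp v k : V) ∈ W := by
  have hv' : v ∈ W.toAddSubgroup := hv
  rw [hW] at hv'
  refine AddSubgroup.iSup_induction (C := fun x => (decompose 𝒱.comp x k : V) ∈ W)
    _ hv' (fun g x hx => ?_) (by simp) (fun x y hx hy => ?_)
  · show (decompose 𝒱.comp x k : V) ∈ W
    by_cases hgk : g = k
    · subst hgk; rw [DirectSum.decompose_of_mem_same 𝒱.comp hx.2]; exact hx.1
    · rw [DirectSum.decompose_of_mem_ne 𝒱.comp hx.2 hgk]; exact W.zero_mem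
  · show (decompose 𝒱.comp (x + y) k : V) ∈ W
    rw [decompose_coe_add]; exact W.add_mem hx hy

lemma RingGrading.exists_left_inv {𝒟 : RingGrading G D} (hdiv : 𝒟.IsDivision) {d : D} {h : G}
    (hd : d ∈ 𝒟.comp h) (hd0 : d ≠ 0) : ∃ c : D, ∀ v : V, op c • op d • v = v := by
  obtain ⟨u, hu⟩ := hdiv h d hd hd0
  refine ⟨(u⁻¹ : Dˣ), fun v => ?_⟩
  rw [smul_smul, ← op_mul, ← hu, Units.mul_inv, op_one, one_smul]

lemma smul_homog_ne_zero (hdiv : 𝒟.IsDivision) {d : D} {h : G}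
    (hd : d ∈ 𝒟.comp h) (hd0 : d ≠ 0) {v : V} (hv : v ≠ 0) : op d • v ≠ 0 := by
  obtain ⟨c, hc⟩ := RingGrading.exists_left_inv (V := V) hdiv hd hd0
  intro h0
  apply hv
  rw [← hc v, h0, smul_zero]

lemma smul_homog_mem_cancel (hdiv : 𝒟.IsDivision) {d : D} {h : G}
    (hd : d ∈ 𝒟.comp h) (hd0 : d ≠ 0) {P : Submodule Dᵐᵒᵖ V} {v : V}
    (hv : op d • v ∈ P) : v ∈ P := by
  obtain ⟨c, hc⟩ := RingGrading.exists_left_inv (V := V) hdiv hd hd0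
  rw [← hc v]
  exact P.smul_mem (op c) hv

lemma component_smul (𝒱 : ModuleGrading G 𝒟 V) {w : V} {g : G} (hw : w ∈ 𝒱.comp g)
    (d : D) (k : G) :
    (decompose 𝒱.comp (op d • w) k : V) =
      op ((decompose 𝒟.comp d (g⁻¹ * k) : D)) • w := by
  classical
  induction d using DirectSum.Decomposition.inductionOn 𝒟.comp with
  | zero => simp
  | @homogeneous h m =>
    have hm : (m : D) ∈ 𝒟.comp h := SetLike.coe_mem _
    have hmem : op (m : D) • w ∈ 𝒱.comp (g * h) := 𝒱.smul_mem hw hm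
    by_cases hk : k = g * h
    · subst hk
      rw [DirectSum.decompose_of_mem_same 𝒱.comp hmem]
      rw [DirectSum.decompose_of_mem_same (hx := by simpa using hm)]
    · rw [DirectSum.decompose_of_mem_ne 𝒱.comp hmem (fun hh => hk hh.symm)]
      rw [DirectSum.decompose_of_mem_ne 𝒟.comp hm
        (by intro hh; apply hk; rw [hh, mul_inv_cancel_left]), op_zero, zero_smul]
  | add a b ha hb =>
    rw [op_add, add_smul, decompose_coe_add, ha, hb, DirectSum.decompose_add,
      DirectSum.add_apply, AddSubgroup.coe_add, op_add, add_smul]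

lemma exists_component_ne_zero {A : Type*} [AddCommGroup A] (𝒜 : G → AddSubgroup A)
    [DirectSum.Decomposition 𝒜] {a : A} (ha : a ≠ 0) :
    ∃ h, (decompose 𝒜 a h : A) ≠ 0 := by
  classical
  by_contra hall
  push_neg at hall
  apply ha
  rw [← DirectSum.sum_support_decompose 𝒜 a]
  exact Finset.sum_eq_zero fun k _ => hall k

lemma unop_eq_zero_of_smul_homog_eq_zero (hdiv : 𝒟.IsDivision) {w : V} {g : G}
    (hw : w ∈ 𝒱.comp g) (hw0 : w ≠ 0) {d : D} (h0 : op d • w = 0) : d = 0 := by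
  classical
  by_contra hd
  obtain ⟨h, hh⟩ := exists_component_ne_zero 𝒟.comp hd
  have h2 := component_smul 𝒱 hw d (g * h)
  rw [h0, inv_mul_cancel_left] at h2
  simp only [DirectSum.decompose_zero, DirectSum.zero_apply, ZeroMemClass.coe_zero] at h2
  exact smul_homog_ne_zero (V := V) hdiv (SetLike.coe_mem _) hh hw0 h2.symm

lemma span_singleton_component_mem {w : V} {g : G} (hw : w ∈ 𝒱.comp g) {v : V}
    (hv : v ∈ Submodule.span Dᵐᵒᵖ {w}) (k : G) :
    (decompose 𝒱.comp v k : V) ∈ Submodule.span Dᵐᵒᵖ {w} := by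
  obtain ⟨a, rfl⟩ := Submodule.mem_span_singleton.1 hv
  rw [show a • w = op (unop a) • w from by simp, component_smul 𝒱 hw]
  exact Submodule.smul_mem _ _ (Submodule.mem_span_singleton_self w)

lemma ModuleGrading.exists_graded_projection (𝒱 : ModuleGrading G 𝒟 V)
    (hdiv : 𝒟.IsDivision) {W : Submodule Dᵐᵒᵖ V}
    (hW : ∀ v ∈ W, ∀ k, (decompose 𝒱.comp v k : V) ∈ W) :
    ∃ π : Module.End Dᵐᵒᵖ V, (∀ w ∈ W, π w = w) ∧ LinearMap.range π = W ∧
      (∀ k, ∀ v ∈ 𝒱.comp k, π v ∈ 𝒱.comp k) := by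
  classical
  set S : Set (Submodule Dᵐᵒᵖ V) :=
    {U | (∀ v ∈ U, ∀ k, (decompose 𝒱.comp v k : V) ∈ U) ∧ W ⊓ U = ⊥} with hS
  obtain ⟨U, hUS, hUmax⟩ : ∃ U, Maximal (· ∈ S) U := by
    refine zorn_le₀ S fun c hcS hc => ?_
    rcases c.eq_empty_or_nonempty with rfl | hne
    · exact ⟨⊥, ⟨fun v hv k => by simp_all, by simp⟩, by simp⟩
    refine ⟨sSup c, ⟨?_, ?_⟩, fun z hz => le_sSup hz⟩
    · intro v hv k
      obtain ⟨U, hUc, hvU⟩ := (Submodule.mem_sSup_of_directed hne hc.directedOn).1 hv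
      exact le_sSup hUc ((hcS hUc).1 v hvU k)
    · rw [eq_bot_iff]
      rintro x ⟨hxW, hxs⟩
      obtain ⟨U, hUc, hxU⟩ := (Submodule.mem_sSup_of_directed hne hc.directedOn).1 hxs
      have : x ∈ W ⊓ U := ⟨hxW, hxU⟩
      rw [(hcS hUc).2] at this
      exact this
  obtain ⟨hUcomp, hUdisj⟩ := hUS
  have hWU : ∀ x ∈ W ⊔ U, ∀ k, (decompose 𝒱.comp x k : V) ∈ W ⊔ U := by
    intro x hx k
    obtain ⟨w, hw, u, hu, rfl⟩ := Submodule.mem_sup.1 hx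
    rw [decompose_coe_add]
    exact add_mem (Submodule.mem_sup_left (hW w hw k))
      (Submodule.mem_sup_right (hUcomp u hu k))
  have hsup : W ⊔ U = ⊤ := by
    by_contra hne
    obtain ⟨v, hv⟩ : ∃ v, v ∉ W ⊔ U := by
      by_contra hALL; push_neg at hALL
      exact hne (eq_top_iff.2 fun x _ => hALL x)
    obtain ⟨g, hg⟩ : ∃ g, (decompose 𝒱.comp v g : V) ∉ W ⊔ U := by
      by_contra hall; push_neg at hall
      apply hv
      rw [← DirectSum.sum_support_decompose 𝒱.comp v]
      exact Submodule.sum_mem _ fun k _ => hall k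
    set w₀ : V := (decompose 𝒱.comp v g : V) with hw₀
    have hw₀g : w₀ ∈ 𝒱.comp g := SetLike.coe_mem _
    have hU₂S : (U ⊔ Submodule.span Dᵐᵒᵖ {w₀}) ∈ S := by
      constructor
      · intro x hx k
        obtain ⟨u, hu, z, hz, rfl⟩ := Submodule.mem_sup.1 hx
        rw [decompose_coe_add]
        exact add_mem (Submodule.mem_sup_left (hUcomp u hu k))
          (Submodule.mem_sup_right (span_singleton_component_mem hw₀g hz k))
      · rw [eq_bot_iff]
        rintro x ⟨hxW, hxU₂⟩
        obtain ⟨u, hu, z, hz, rfl⟩ := Submodule.mem_sup.1 hxU₂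
        obtain ⟨a, rfl⟩ := Submodule.mem_span_singleton.1 hz
        have haw : a • w₀ ∈ W ⊔ U := by
          have heq : a • w₀ = (u + a • w₀) - u := by abel
          rw [heq]
          exact sub_mem (Submodule.mem_sup_left hxW) (Submodule.mem_sup_right hu)
        have ha : unop a = 0 := by
          by_contra ha0
          obtain ⟨h, hh⟩ := exists_component_ne_zero 𝒟.comp ha0
          have hcomp : (decompose 𝒱.comp (a • w₀) (g * h) : V) ∈ W ⊔ U :=
            hWU _ haw _
          rw [show a • w₀ = op (unop a) • w₀ from by simp,
            component_smul 𝒱 hw₀g, inv_mul_cancel_left] at hcomp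
          exact hg (smul_homog_mem_cancel hdiv (SetLike.coe_mem _) hh hcomp)
        have ha' : a = 0 := by rw [← op_unop a, ha, op_zero]
        rw [ha', zero_smul, add_zero] at hxW ⊢
        have : u ∈ W ⊓ U := ⟨hxW, hu⟩
        rw [hUdisj] at this
        exact this
    have hlt : U < U ⊔ Submodule.span Dᵐᵒᵖ {w₀} := by
      refine lt_of_le_of_ne le_sup_left fun hEq => ?_
      apply hg
      have : w₀ ∈ U ⊔ Submodule.span Dᵐᵒᵖ {w₀} :=
        Submodule.mem_sup_right (Submodule.mem_span_singleton_self w₀)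
      rw [← hEq] at this
      exact Submodule.mem_sup_right this
    exact absurd (hUmax hU₂S hlt.le) (not_le_of_gt hlt)
  have hcompl : IsCompl W U := ⟨disjoint_iff.2 hUdisj, codisjoint_iff.2 hsup⟩
  set π : Module.End Dᵐᵒᵖ V := W.subtype ∘ₗ Submodule.linearProjOfIsCompl W U hcompl with hπ
  have hfix : ∀ w ∈ W, π w = w := fun w hw => by
    exact congrArg Subtype.val (Submodule.linearProjOfIsCompl_apply_left hcompl ⟨w, hw⟩)
  have hmemW : ∀ v, π v ∈ W := fun v => SetLike.coe_mem _
  refine ⟨π, hfix, le_antisymm ?_ ?_, ?_⟩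
  · rintro x ⟨v, rfl⟩; exact hmemW v
  · intro w hw; exact ⟨w, hfix w hw⟩
  · intro k v hv
    have hU' : v - π v ∈ U := by
      have h0 : Submodule.linearProjOfIsCompl W U hcompl (v - π v) = 0 := by
        rw [map_sub]
        have : Submodule.linearProjOfIsCompl W U hcompl (π v) =
            Submodule.linearProjOfIsCompl W U hcompl v := by
          have := Submodule.linearProjOfIsCompl_apply_left hcompl
            (Submodule.linearProjOfIsCompl W U hcompl v)
          exact this
        rw [this, sub_self]
      have := Submodule.linearProjOfIsCompl_ker (h := hcompl)
      rw [← this]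
      exact LinearMap.mem_ker.2 h0
    refine 𝒱.mem_of_forall_ne fun m hm => ?_
    have h1 : (decompose 𝒱.comp (π v) m : V) ∈ W := hW _ (hmemW v) m
    have h2 : (decompose 𝒱.comp (v - π v) m : V) ∈ U := hUcomp _ hU' m
    have h3 : (decompose 𝒱.comp (π v) m : V) + (decompose 𝒱.comp (v - π v) m : V)
        = (decompose 𝒱.comp v m : V) := by
      rw [← decompose_coe_add]
      have heq : π v + (v - π v) = v := by abel
      rw [heq]
    have h4 : (decompose 𝒱.comp v m : V) = 0 :=
      DirectSum.decompose_of_mem_ne 𝒱.comp hv (fun hkm => hm hkm.symm)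
    have h5 : (decompose 𝒱.comp (π v) m : V) ∈ W ⊓ U := by
      refine ⟨h1, ?_⟩
      have : (decompose 𝒱.comp (π v) m : V) = -(decompose 𝒱.comp (v - π v) m : V) := by
        rw [eq_neg_iff_add_eq_zero, h3, h4]
      rw [this]
      exact U.neg_mem h2
    rw [hUdisj] at h5
    exact h5

lemma exists_hitting (𝒱 : ModuleGrading G 𝒟 V) (hdiv : 𝒟.IsDivision) {w : V} {g : G}
    (hw : w ∈ 𝒱.comp g) (hw0 : w ≠ 0) (v : V) :
    ∃ x : Module.End Dᵐᵒᵖ V, x w = v ∧ ∀ u : V, ∃ a : Dᵐᵒᵖ, x u = a • v := by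
  obtain ⟨π, hfix, hrange, -⟩ := 𝒱.exists_graded_projection hdiv
    (W := Submodule.span Dᵐᵒᵖ {w}) (fun v hv k => span_singleton_component_mem hw hv k)
  have hinj : Function.Injective (LinearMap.toSpanSingleton Dᵐᵒᵖ V w) := by
    intro a b hab
    have hab' : (a - b) • w = 0 := by
      rw [sub_smul]
      simp only [LinearMap.toSpanSingleton_apply] at hab
      rw [hab, sub_self]
    have : unop (a - b) = 0 := by
      refine unop_eq_zero_of_smul_homog_eq_zero hdiv hw hw0 (d := unop (a - b)) ?_
      rw [op_unop]
      exact hab'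
    have : a - b = 0 := by rw [← op_unop (a - b), this, op_zero]
    exact sub_eq_zero.1 this
  have hmem : ∀ u : V, π u ∈ LinearMap.range (LinearMap.toSpanSingleton Dᵐᵒᵖ V w) := by
    intro u
    rw [← LinearMap.span_singleton_eq_range]
    rw [← hrange]
    exact LinearMap.mem_range_self π u
  set eqv := LinearEquiv.ofInjective (LinearMap.toSpanSingleton Dᵐᵒᵖ V w) hinj with heqv
  set ρ : V →ₗ[Dᵐᵒᵖ] (LinearMap.range (LinearMap.toSpanSingleton Dᵐᵒᵖ V w)) :=
    π.codRestrict _ hmem with hρ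
  set x : Module.End Dᵐᵒᵖ V := (LinearMap.toSpanSingleton Dᵐᵒᵖ V v).comp
    ((eqv.symm : _ →ₗ[Dᵐᵒᵖ] Dᵐᵒᵖ).comp ρ) with hx
  refine ⟨x, ?_, fun u => ⟨eqv.symm (ρ u), by simp [hx]⟩⟩
  have hwmem : w ∈ LinearMap.range (LinearMap.toSpanSingleton Dᵐᵒᵖ V w) :=
    ⟨1, by simp⟩
  have hρw : ρ w = ⟨w, hwmem⟩ := by
    apply Subtype.ext
    simpa [hρ] using hfix w (Submodule.mem_span_singleton_self w)
  have h1 : eqv.symm ⟨w, hwmem⟩ = 1 := by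
    rw [LinearEquiv.symm_apply_eq]
    apply Subtype.ext
    rw [heqv, LinearEquiv.ofInjective_apply]
    simp
  simp [hx, hρw, h1]

lemma GradedFlag.mem_mono {r : ℕ} (F : GradedFlag 𝒱 r) : Monotone F.mem := by
  refine monotone_nat_of_le_succ fun i => ?_
  rcases lt_or_ge i r with h | h
  · exact (F.strict i h).le
  · rw [F.stable i h, F.stable (i + 1) (h.trans (Nat.le_succ i))]

lemma GradedFlag.mem_flagEnd_of_range_le {r : ℕ} (F : GradedFlag 𝒱 r) (hr : 0 < r)
    {x : Module.End Dᵐᵒᵖ V} (hx : ∀ u, x u ∈ F.mem 1) : x ∈ F.flagEnd := by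
  intro i v hv
  rcases Nat.eq_zero_or_pos i with rfl | hi
  · rw [F.bot] at hv ⊢
    rw [Submodule.mem_bot] at hv
    rw [hv, map_zero]
    exact Submodule.zero_mem _
  · exact F.mem_mono hi (hx v)

lemma GradedFlag.first_ne_bot {r : ℕ} (F : GradedFlag 𝒱 r) (hr : 0 < r) :
    F.mem 1 ≠ ⊥ := by
  have := F.strict 0 hr
  rw [F.bot] at this
  exact (bot_lt_iff_ne_bot.1 this)

lemma GradedFlag.first_le_of_invariant {r : ℕ} (F : GradedFlag 𝒱 r) (hdiv : 𝒟.IsDivision)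
    (hr : 0 < r) {W : Submodule Dᵐᵒᵖ V} (hW0 : W ≠ ⊥)
    (hWcomp : ∀ v ∈ W, ∀ k, (decompose 𝒱.comp v k : V) ∈ W)
    (hWinv : ∀ a ∈ F.flagEnd, ∀ u ∈ W, a u ∈ W) :
    F.mem 1 ≤ W := by
  classical
  obtain ⟨u, huW, hu0⟩ : ∃ u, u ∈ W ∧ u ≠ 0 := by
    by_contra hall; push_neg at hall
    exact hW0 (eq_bot_iff.2 fun z hz => (Submodule.mem_bot _).2 (hall z hz))
  obtain ⟨g, hg⟩ := exists_component_ne_zero 𝒱.comp hu0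
  set w : V := (decompose 𝒱.comp u g : V) with hwdef
  have hwW : w ∈ W := hWcomp u huW g
  have hwg : w ∈ 𝒱.comp g := SetLike.coe_mem _
  intro v hv
  obtain ⟨x, hxw, hxspan⟩ := exists_hitting 𝒱 hdiv hwg hg v
  have hxR : x ∈ F.flagEnd := by
    refine F.mem_flagEnd_of_range_le hr fun z => ?_
    obtain ⟨a, ha⟩ := hxspan z
    rw [ha]
    exact Submodule.smul_mem _ _ hv
  have := hWinv x hxR w hwW
  rwa [hxw] at this

lemma GradedFlag.exists_flag_projection {r : ℕ} (F : GradedFlag 𝒱 r)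
    (hdiv : 𝒟.IsDivision) (hr : 0 < r) :
    ∃ p : Module.End Dᵐᵒᵖ V, p ∈ F.flagEnd ∧ p ∈ 𝒱.endComp 1 ∧ p * p = p ∧ p ≠ 0 ∧
      LinearMap.range p = F.mem 1 ∧ (∀ w ∈ F.mem 1, p w = w) := by
  have hcomp : ∀ v ∈ F.mem 1, ∀ k, (decompose 𝒱.comp v k : V) ∈ F.mem 1 :=
    fun v hv k => (F.homog 1).component_mem hv k
  obtain ⟨π, hfix, hrange, hgr⟩ := 𝒱.exists_graded_projection hdiv hcomp
  have hmem1 : ∀ u, π u ∈ F.mem 1 := fun u => by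
    rw [← hrange]; exact LinearMap.mem_range_self π u
  refine ⟨π, F.mem_flagEnd_of_range_le hr hmem1, ?_, ?_, ?_, hrange, hfix⟩
  · intro g v hv
    rw [one_mul]
    exact hgr g v hv
  · apply LinearMap.ext
    intro v
    exact hfix (π v) (hmem1 v)
  · obtain ⟨v, hv, hv0⟩ : ∃ v, v ∈ F.mem 1 ∧ v ≠ 0 := by
      by_contra hall; push_neg at hall
      exact F.first_ne_bot hr (eq_bot_iff.2 fun z hz => (Submodule.mem_bot _).2 (hall z hz))
    intro h0
    apply hv0
    rw [← hfix v hv, h0]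
    rfl

/-- The additive projection onto the `k`-th component. -/
noncomputable def ModuleGrading.projAdd (𝒱 : ModuleGrading G 𝒟 V) (k : G) : V →+ V where
  toFun v := (decompose 𝒱.comp v k : V)
  map_zero' := by simp
  map_add' v w := decompose_coe_add 𝒱 v w k

@[simp] lemma ModuleGrading.projAdd_apply (𝒱 : ModuleGrading G 𝒟 V) (k : G) (v : V) :
    𝒱.projAdd k v = (decompose 𝒱.comp v k : V) := rfl

/-- The degree-`τ` additive component of an endomorphism. -/
noncomputable def endHomCompAux (𝒱 : ModuleGrading G 𝒟 V) (x : Module.End Dᵐᵒᵖ V)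
    (τ : G) : V →+ V :=
  (DirectSum.toAddMonoid (fun g => (𝒱.projAdd (τ * g)).comp
      (x.toAddMonoidHom.comp (𝒱.comp g).subtype))).comp
    (DirectSum.decomposeAddEquiv 𝒱.comp).toAddMonoidHom

lemma endHomCompAux_apply_of_mem (𝒱 : ModuleGrading G 𝒟 V) (x : Module.End Dᵐᵒᵖ V)
    (τ : G) {v : V} {g : G} (hv : v ∈ 𝒱.comp g) :
    endHomCompAux 𝒱 x τ v = (decompose 𝒱.comp (x v) (τ * g) : V) := by
  unfold endHomCompAux
  simp only [AddMonoidHom.comp_apply, AddEquiv.toAddMonoidHom_eq_coe,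
    AddMonoidHom.coe_coe, DirectSum.decomposeAddEquiv_apply]
  rw [DirectSum.decompose_of_mem 𝒱.comp hv, DirectSum.toAddMonoid_of]
  rfl

lemma component_smul_homog (𝒱 : ModuleGrading G 𝒟 V) {d : D} {h : G}
    (hd : d ∈ 𝒟.comp h) (u : V) (k : G) :
    (decompose 𝒱.comp (op d • u) k : V) = op d • (decompose 𝒱.comp u (k * h⁻¹) : V) := by
  induction u using DirectSum.Decomposition.inductionOn 𝒱.comp with
  | zero => simp
  | @homogeneous m w =>
    have hw : (w : V) ∈ 𝒱.comp m := SetLike.coe_mem _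
    have h1 : op d • (w : V) ∈ 𝒱.comp (m * h) := 𝒱.smul_mem hw hd
    by_cases hk : k = m * h
    · subst hk
      rw [DirectSum.decompose_of_mem_same 𝒱.comp h1,
        show m * h * h⁻¹ = m by group, DirectSum.decompose_of_mem_same 𝒱.comp hw]
    · rw [DirectSum.decompose_of_mem_ne 𝒱.comp h1 (fun hh => hk hh.symm),
        DirectSum.decompose_of_mem_ne 𝒱.comp hw
          (fun hh => hk (by rw [hh]; group)), smul_zero]
  | add a b ha hb =>
    rw [smul_add, decompose_coe_add, ha, hb, decompose_coe_add, smul_add]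

lemma endHomCompAux_smul_hom (𝒱 : ModuleGrading G 𝒟 V) (x : Module.End Dᵐᵒᵖ V)
    (τ : G) {v : V} {g : G} (hv : v ∈ 𝒱.comp g) (d : D) :
    endHomCompAux 𝒱 x τ (op d • v) = op d • endHomCompAux 𝒱 x τ v := by
  induction d using DirectSum.Decomposition.inductionOn 𝒟.comp with
  | zero => simp
  | @homogeneous h m =>
    have hm : (m : D) ∈ 𝒟.comp h := SetLike.coe_mem _
    have h1 : op (m : D) • v ∈ 𝒱.comp (g * h) := 𝒱.smul_mem hv hm
    rw [endHomCompAux_apply_of_mem 𝒱 x τ h1, endHomCompAux_apply_of_mem 𝒱 x τ hv,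
      map_smul, component_smul_homog 𝒱 hm, show τ * (g * h) * h⁻¹ = τ * g by group]
  | add a b ha hb =>
    rw [op_add, add_smul, add_smul, map_add, ha, hb]

lemma endHomCompAux_smul (𝒱 : ModuleGrading G 𝒟 V) (x : Module.End Dᵐᵒᵖ V)
    (τ : G) (a : Dᵐᵒᵖ) (v : V) :
    endHomCompAux 𝒱 x τ (a • v) = a • endHomCompAux 𝒱 x τ v := by
  induction v using DirectSum.Decomposition.inductionOn 𝒱.comp with
  | zero => simp
  | @homogeneous g w =>
    rw [show a = op (unop a) from (op_unop a).symm]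
    exact endHomCompAux_smul_hom 𝒱 x τ (SetLike.coe_mem w) (unop a)
  | add u u' hu hu' =>
    rw [smul_add, map_add, hu, hu', map_add, smul_add]

/-- The degree-`τ` component of an endomorphism, as an endomorphism. -/
noncomputable def endHomComp (𝒱 : ModuleGrading G 𝒟 V) (x : Module.End Dᵐᵒᵖ V)
    (τ : G) : Module.End Dᵐᵒᵖ V where
  toFun := endHomCompAux 𝒱 x τ
  map_add' := (endHomCompAux 𝒱 x τ).map_add
  map_smul' := endHomCompAux_smul 𝒱 x τ

lemma endHomComp_apply_of_mem (𝒱 : ModuleGrading G 𝒟 V) (x : Module.End Dᵐᵒᵖ V)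
    (τ : G) {v : V} {g : G} (hv : v ∈ 𝒱.comp g) :
    endHomComp 𝒱 x τ v = (decompose 𝒱.comp (x v) (τ * g) : V) :=
  endHomCompAux_apply_of_mem 𝒱 x τ hv

lemma endHomComp_mem_endComp (𝒱 : ModuleGrading G 𝒟 V) (x : Module.End Dᵐᵒᵖ V)
    (τ : G) : endHomComp 𝒱 x τ ∈ 𝒱.endComp τ := by
  intro g v hv
  rw [endHomComp_apply_of_mem 𝒱 x τ hv]
  exact SetLike.coe_mem _

lemma endHomComp_mem_flagEnd {r : ℕ} (F : GradedFlag 𝒱 r) {x : Module.End Dᵐᵒᵖ V}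
    (hx : x ∈ F.flagEnd) (τ : G) : endHomComp 𝒱 x τ ∈ F.flagEnd := by
  classical
  intro i v hv
  rw [show v = ∑ g ∈ (decompose 𝒱.comp v).support, (decompose 𝒱.comp v g : V) from
    (DirectSum.sum_support_decompose 𝒱.comp v).symm, map_sum]
  refine Submodule.sum_mem _ fun g hg => ?_
  rw [endHomComp_apply_of_mem 𝒱 x τ (SetLike.coe_mem _)]
  exact (F.homog i).component_mem (hx i _ ((F.homog i).component_mem hv g)) _

lemma endHomComp_sum (𝒱 : ModuleGrading G 𝒟 V) [Module.Finite Dᵐᵒᵖ V]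
    (x : Module.End Dᵐᵒᵖ V) :
    ∃ T : Finset G, x = ∑ τ ∈ T, endHomComp 𝒱 x τ := by
  classical
  obtain ⟨s, hs⟩ := Module.Finite.fg_top (R := Dᵐᵒᵖ) (M := V)
  set T : Finset G := s.biUnion (fun b => ((decompose 𝒱.comp b).support).biUnion
    (fun g => ((decompose 𝒱.comp (x (decompose 𝒱.comp b g))).support).image
      (fun k => k * g⁻¹))) with hT
  refine ⟨T, (LinearMap.ext_on hs fun b hb => ?_).symm⟩
  rw [LinearMap.sum_apply]
  have hrepr : ∀ τ : G, endHomComp 𝒱 x τ b =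
      ∑ g ∈ (decompose 𝒱.comp b).support, (decompose 𝒱.comp
        (x (decompose 𝒱.comp b g : V)) (τ * g) : V) := by
    intro τ
    conv_lhs => rw [show b = ∑ g ∈ (decompose 𝒱.comp b).support,
      (decompose 𝒱.comp b g : V) from (DirectSum.sum_support_decompose 𝒱.comp b).symm]
    rw [map_sum]
    exact Finset.sum_congr rfl fun g _ =>
      endHomComp_apply_of_mem 𝒱 x τ (SetLike.coe_mem _)
  calc ∑ τ ∈ T, endHomComp 𝒱 x τ b
      = ∑ τ ∈ T, ∑ g ∈ (decompose 𝒱.comp b).support, (decompose 𝒱.comp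
          (x (decompose 𝒱.comp b g : V)) (τ * g) : V) := by
        exact Finset.sum_congr rfl fun τ _ => hrepr τ
    _ = ∑ g ∈ (decompose 𝒱.comp b).support, ∑ τ ∈ T, (decompose 𝒱.comp
          (x (decompose 𝒱.comp b g : V)) (τ * g) : V) := Finset.sum_comm
    _ = ∑ g ∈ (decompose 𝒱.comp b).support, x (decompose 𝒱.comp b g : V) := by
        refine Finset.sum_congr rfl fun g hg => ?_
        set u : V := x (decompose 𝒱.comp b g : V) with hu
        have himg : (decompose 𝒱.comp u).support ⊆ T.image (fun τ => τ * g) := by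
          intro k hk
          refine Finset.mem_image.2 ⟨k * g⁻¹, ?_, by group⟩
          rw [hT]
          refine Finset.mem_biUnion.2 ⟨b, hb, Finset.mem_biUnion.2 ⟨g, hg, ?_⟩⟩
          exact Finset.mem_image.2 ⟨k, hk, rfl⟩
        have hinj : ∀ a ∈ T, ∀ c ∈ T, a * g = c * g → a = c := by
          intro a _ c _ hac
          exact mul_right_cancel hac
        have hsum1 : ∑ k ∈ T.image (fun τ => τ * g), (decompose 𝒱.comp u k : V)
            = ∑ τ ∈ T, (decompose 𝒱.comp u (τ * g) : V) := Finset.sum_image hinj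
        rw [← hsum1, ← Finset.sum_subset himg (fun k _ hk => by
          rw [DFinsupp.notMem_support_iff.1 hk]; rfl)]
        exact DirectSum.sum_support_decompose 𝒱.comp u
    _ = x b := by
        rw [← map_sum, DirectSum.sum_support_decompose 𝒱.comp b]

lemma end_eq_zero_of_components (𝒱 : ModuleGrading G 𝒟 V) {x : Module.End Dᵐᵒᵖ V}
    (h : ∀ g, ∀ v ∈ 𝒱.comp g, x v = 0) : x = 0 := by
  classical
  apply LinearMap.ext
  intro v
  rw [LinearMap.zero_apply, show v = ∑ g ∈ (decompose 𝒱.comp v).support,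
    (decompose 𝒱.comp v g : V) from (DirectSum.sum_support_decompose 𝒱.comp v).symm,
    map_sum]
  exact Finset.sum_eq_zero fun g _ => h g _ (SetLike.coe_mem _)

lemma decompose_apply_of_endComp_one (𝒱 : ModuleGrading G 𝒟 V) {x : Module.End Dᵐᵒᵖ V}
    (hx : x ∈ 𝒱.endComp 1) (u : V) (k : G) :
    (decompose 𝒱.comp (x u) k : V) = x (decompose 𝒱.comp u k : V) := by
  induction u using DirectSum.Decomposition.inductionOn 𝒱.comp with
  | zero => simp
  | @homogeneous g w =>
    have hw : (w : V) ∈ 𝒱.comp g := SetLike.coe_mem _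
    have h1 : x w ∈ 𝒱.comp g := by
      have := hx g w hw
      rwa [one_mul] at this
    by_cases hk : k = g
    · subst hk
      rw [DirectSum.decompose_of_mem_same 𝒱.comp h1,
        DirectSum.decompose_of_mem_same 𝒱.comp hw]
    · rw [DirectSum.decompose_of_mem_ne 𝒱.comp h1 (fun hh => hk hh.symm),
        DirectSum.decompose_of_mem_ne 𝒱.comp hw (fun hh => hk hh.symm), map_zero]
  | add a b ha hb =>
    rw [map_add, decompose_coe_add, ha, hb, decompose_coe_add, map_add]

lemma component_eq_zero_of_sum_endComp_one (𝒱 : ModuleGrading G 𝒟 V) {T : Finset G}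
    {y : G → Module.End Dᵐᵒᵖ V} (hy : ∀ τ ∈ T, y τ ∈ 𝒱.endComp τ)
    (hsum : (∑ τ ∈ T, y τ) ∈ 𝒱.endComp 1) {τ₀ : G} (hτ₀ : τ₀ ∈ T) (hne : τ₀ ≠ 1) :
    y τ₀ = 0 := by
  classical
  refine end_eq_zero_of_components 𝒱 fun g v hv => ?_
  have h1 : (∑ τ ∈ T, y τ) v ∈ 𝒱.comp g := by
    have := hsum g v hv
    rwa [one_mul] at this
  have h2 : (decompose 𝒱.comp ((∑ τ ∈ T, y τ) v) (τ₀ * g) : V) = 0 :=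
    DirectSum.decompose_of_mem_ne 𝒱.comp h1
      (fun hh => hne (mul_right_cancel (b := g)
        (show τ₀ * g = 1 * g by rw [← hh, one_mul])))
  rw [LinearMap.sum_apply] at h2
  have h3 : (decompose 𝒱.comp (∑ τ ∈ T, y τ v) (τ₀ * g) : V)
      = ∑ τ ∈ T, (decompose 𝒱.comp (y τ v) (τ₀ * g) : V) :=
    map_sum (𝒱.projAdd (τ₀ * g)) (fun τ => y τ v) T
  rw [h3] at h2
  rw [Finset.sum_eq_single τ₀ (fun τ hτ hττ₀ =>
      DirectSum.decompose_of_mem_ne 𝒱.comp (hy τ hτ g v hv)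
        (fun hh => hττ₀ (mul_right_cancel hh)))
      (fun h => absurd hτ₀ h)] at h2
  rw [DirectSum.decompose_of_mem_same 𝒱.comp (hy τ₀ hτ₀ g v hv)] at h2
  exact h2

end Aux
set_option maxHeartbeats 1000000 in
set_option synthInstance.maxHeartbeats 200000 in
/-- a graded algebra isomorphism `ψ : End_D 𝓕 → End_{D'} 𝓕'` maps an
idempotent `e` with `e(V) = V₁` to an endomorphism with image `V₁'`. -/
theorem graded_iso_maps_first_member_projection
    {D' : Type*} [Ring D'] {𝒟' : RingGrading G D'}
    {V' : Type*} [AddCommGroup V'] [Module D'ᵐᵒᵖ V']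
    (hdiv : 𝒟.IsDivision) (hdiv' : 𝒟'.IsDivision)
    [Module.Finite Dᵐᵒᵖ V] [Module.Finite D'ᵐᵒᵖ V']
    {𝒱 : ModuleGrading G 𝒟 V} {𝒱' : ModuleGrading G 𝒟' V'}
    {r r' : ℕ} (F : GradedFlag 𝒱 r) (F' : GradedFlag 𝒱' r') (hr : 0 < r) (hr' : 0 < r')
    (ψ : F.flagEnd ≃+* F'.flagEnd)
    (hψ : ∀ (τ : G) (f : F.flagEnd),
      (f : Module.End Dᵐᵒᵖ V) ∈ 𝒱.endComp τ → (ψ f : Module.End D'ᵐᵒᵖ V') ∈ 𝒱'.endComp τ)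
    (e : Module.End Dᵐᵒᵖ V) (he : e ∈ F.flagEnd) (hne : e ≠ 0) (hee : e * e = e)
    (hrange : LinearMap.range e = F.mem 1) :
    LinearMap.range ((ψ ⟨e, he⟩ : Module.End D'ᵐᵒᵖ V')) = F'.mem 1 := by
  classical
  obtain ⟨p, hpR, hp1, hpp, hp0, hprange, hpfix⟩ := F.exists_flag_projection hdiv hr
  obtain ⟨p', hp'R, hp'1, hp'p', hp'0, hp'range, hp'fix⟩ :=
    F'.exists_flag_projection hdiv' hr'
  set eS : F.flagEnd := ⟨e, he⟩ with heS
  set pS : F.flagEnd := ⟨p, hpR⟩ with hpS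
  set pS' : F'.flagEnd := ⟨p', hp'R⟩ with hpS'
  set e' : Module.End D'ᵐᵒᵖ V' := (ψ eS : Module.End D'ᵐᵒᵖ V') with he'
  set q' : Module.End D'ᵐᵒᵖ V' := (ψ pS : Module.End D'ᵐᵒᵖ V') with hq'
  -- `e` fixes `F.mem 1`
  have he_fix : ∀ w ∈ F.mem 1, e w = w := by
    intro w hw
    rw [← hrange] at hw
    obtain ⟨u, rfl⟩ := hw
    have h1 := LinearMap.ext_iff.1 hee u
    rw [Module.End.mul_apply] at h1
    exact h1
  -- ring identities in `End V`
  have hep : e * p = p := by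
    apply LinearMap.ext
    intro v
    rw [Module.End.mul_apply]
    exact he_fix _ (hprange ▸ LinearMap.mem_range_self p v)
  have hfe_mem : ∀ v, e v ∈ F.mem 1 := fun v =>
    hrange ▸ LinearMap.mem_range_self e v
  have hpinv : ∀ a ∈ F.flagEnd, p * a * p = a * p := by
    intro a ha
    apply LinearMap.ext
    intro v
    rw [Module.End.mul_apply, Module.End.mul_apply, Module.End.mul_apply]
    exact hpfix _ (ha 1 _ (hprange ▸ LinearMap.mem_range_self p v))
  have hp'inv : ∀ a ∈ F'.flagEnd, p' * a * p' = a * p' := by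
    intro a ha
    apply LinearMap.ext
    intro v
    rw [Module.End.mul_apply, Module.End.mul_apply, Module.End.mul_apply]
    exact hp'fix _ (ha 1 _ (hp'range ▸ LinearMap.mem_range_self p' v))
  -- transfer : `e' * q' = q'`
  have heq' : e' * q' = q' := by
    have h1 : eS * pS = pS := Subtype.ext hep
    have h2 : ψ eS * ψ pS = ψ pS := by rw [← map_mul ψ eS pS, h1]
    calc e' * q' = ((ψ eS * ψ pS : F'.flagEnd) : Module.End D'ᵐᵒᵖ V') := rfl
      _ = ((ψ pS : F'.flagEnd) : Module.End D'ᵐᵒᵖ V') := by rw [h2]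
      _ = q' := rfl
  -- `q'` is homogeneous of degree 1
  have hq'1 : q' ∈ 𝒱'.endComp 1 := hψ 1 pS hp1
  -- `q' * a * q' = a * q'` for all `a ∈ F'.flagEnd`
  have hq'inv : ∀ a, ∀ ha : a ∈ F'.flagEnd, q' * a * q' = a * q' := by
    intro a ha
    have h1 : pS * (ψ.symm ⟨a, ha⟩) * pS = (ψ.symm ⟨a, ha⟩) * pS :=
      Subtype.ext (hpinv _ (ψ.symm ⟨a, ha⟩).2)
    have h2 : ψ pS * ⟨a, ha⟩ * ψ pS = ⟨a, ha⟩ * ψ pS := by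
      have h3 := congrArg ψ h1
      rwa [map_mul ψ, map_mul ψ, map_mul ψ, RingEquiv.apply_symm_apply] at h3
    calc q' * a * q' = ((ψ pS * ⟨a, ha⟩ * ψ pS : F'.flagEnd) : Module.End D'ᵐᵒᵖ V') := rfl
      _ = ((⟨a, ha⟩ * ψ pS : F'.flagEnd) : Module.End D'ᵐᵒᵖ V') := by rw [h2]
      _ = a * q' := rfl
  -- `q'` is nonzero
  have hq'0 : q' ≠ 0 := by
    intro h0
    apply hp0
    have h1 : ψ pS = 0 := Subtype.ext h0
    have h2 : pS = 0 := by
      have h3 := congrArg ψ.symm h1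
      rwa [RingEquiv.symm_apply_apply, map_zero ψ.symm] at h3
    exact congrArg Subtype.val h2
  -- the range of `q'` contains `F'.mem 1` and is contained in the range of `e'`
  have hX0 : LinearMap.range q' ≠ ⊥ := fun h0 => hq'0 (LinearMap.range_eq_bot.1 h0)
  have hXcomp : ∀ v ∈ LinearMap.range q', ∀ k,
      (DirectSum.decompose 𝒱'.comp v k : V') ∈ LinearMap.range q' := by
    rintro v ⟨u, rfl⟩ k
    rw [decompose_apply_of_endComp_one 𝒱' hq'1]
    exact LinearMap.mem_range_self _ _
  have hXinv : ∀ a ∈ F'.flagEnd, ∀ u ∈ LinearMap.range q', a u ∈ LinearMap.range q' := by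
    rintro a ha u ⟨z, rfl⟩
    have h1 : a (q' z) = (q' * (a * q')) z := by
      rw [← mul_assoc, hq'inv a ha, Module.End.mul_apply]
    rw [h1]
    exact LinearMap.mem_range_self _ _
  have hV1X : F'.mem 1 ≤ LinearMap.range q' :=
    F'.first_le_of_invariant hdiv' hr' hX0 hXcomp hXinv
  have hXe' : LinearMap.range q' ≤ LinearMap.range e' := by
    rintro u ⟨z, rfl⟩
    have h1 : q' z = e' (q' z) := by
      conv_lhs => rw [← heq']
      rfl
    rw [h1]
    exact LinearMap.mem_range_self _ _
  -- second direction : `f := ψ.symm pS'`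
  set fS : F.flagEnd := ψ.symm pS' with hfS
  set f : Module.End Dᵐᵒᵖ V := (fS : Module.End Dᵐᵒᵖ V) with hf
  have hψf : ψ fS = pS' := ψ.apply_symm_apply pS'
  obtain ⟨T, hT⟩ := endHomComp_sum 𝒱 f
  set c : G → Module.End Dᵐᵒᵖ V := endHomComp 𝒱 f with hc
  have hcR : ∀ τ, c τ ∈ F.flagEnd := fun τ => endHomComp_mem_flagEnd F fS.2 τ
  have hcτ : ∀ τ, c τ ∈ 𝒱.endComp τ := fun τ => endHomComp_mem_endComp 𝒱 f τ
  set S : F.flagEnd := ∑ τ ∈ T, ⟨c τ, hcR τ⟩ with hS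
  have hcoesum : (S : Module.End Dᵐᵒᵖ V) = ∑ τ ∈ T, c τ := by
    rw [hS]
    simpa using map_sum F.flagEnd.subtype (fun τ => (⟨c τ, hcR τ⟩ : F.flagEnd)) T
  have hsubsum : fS = S := by
    apply Subtype.ext
    show (fS : Module.End Dᵐᵒᵖ V) = (S : Module.End Dᵐᵒᵖ V)
    rw [hcoesum]
    exact hT
  have h1sum : pS' = ∑ τ ∈ T, ψ ⟨c τ, hcR τ⟩ := by
    rw [← hψf, hsubsum, hS, map_sum ψ _ T]
  have hp'sum : p' = ∑ τ ∈ T, ((ψ ⟨c τ, hcR τ⟩ : F'.flagEnd) : Module.End D'ᵐᵒᵖ V') := by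
    have h2 := congrArg Subtype.val h1sum
    have h3 : (Subtype.val (∑ τ ∈ T, ψ (⟨c τ, hcR τ⟩ : F.flagEnd)))
        = ∑ τ ∈ T, ((ψ ⟨c τ, hcR τ⟩ : F'.flagEnd) : Module.End D'ᵐᵒᵖ V') := by
      simpa using map_sum F'.flagEnd.subtype (fun τ => ψ (⟨c τ, hcR τ⟩ : F.flagEnd)) T
    exact h2.trans h3
  have hzero : ∀ τ ∈ T, τ ≠ 1 →
      ((ψ ⟨c τ, hcR τ⟩ : F'.flagEnd) : Module.End D'ᵐᵒᵖ V') = 0 := by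
    intro τ hτ hτ1
    refine component_eq_zero_of_sum_endComp_one 𝒱'
      (y := fun τ => ((ψ ⟨c τ, hcR τ⟩ : F'.flagEnd) : Module.End D'ᵐᵒᵖ V'))
      (fun σ _ => hψ σ ⟨c σ, hcR σ⟩ (hcτ σ)) ?_ hτ hτ1
    rw [← hp'sum]
    exact hp'1
  have hczero : ∀ τ ∈ T, τ ≠ 1 → c τ = 0 := by
    intro τ hτ hτ1
    have h1 : ψ (⟨c τ, hcR τ⟩ : F.flagEnd) = 0 := Subtype.ext (hzero τ hτ hτ1)
    have h2 : (⟨c τ, hcR τ⟩ : F.flagEnd) = 0 := by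
      have h3 := congrArg ψ.symm h1
      rwa [RingEquiv.symm_apply_apply, map_zero ψ.symm] at h3
    exact congrArg Subtype.val h2
  have hf1 : f ∈ 𝒱.endComp 1 := by
    rw [hT]
    refine AddSubgroup.sum_mem _ fun τ hτ => ?_
    by_cases h1 : τ = 1
    · subst h1; exact hcτ 1
    · rw [hczero τ hτ h1]; exact zero_mem _
  have hff : f * f = f := by
    have h1 : fS * fS = fS := by
      apply ψ.injective
      rw [map_mul ψ, hψf]
      exact Subtype.ext hp'p'
    calc f * f = ((fS * fS : F.flagEnd) : Module.End Dᵐᵒᵖ V) := rfl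
      _ = (fS : Module.End Dᵐᵒᵖ V) := by rw [h1]
      _ = f := rfl
  have hf0 : f ≠ 0 := by
    intro h0
    apply hp'0
    have h1 : fS = 0 := Subtype.ext h0
    have h2 : pS' = 0 := by rw [← hψf, h1, map_zero ψ]
    exact congrArg Subtype.val h2
  have hfinv : ∀ a, ∀ ha : a ∈ F.flagEnd, f * a * f = a * f := by
    intro a ha
    have h1 : fS * ⟨a, ha⟩ * fS = ⟨a, ha⟩ * fS := by
      apply ψ.injective
      rw [map_mul ψ, map_mul ψ, map_mul ψ, hψf]
      exact Subtype.ext (hp'inv _ (ψ ⟨a, ha⟩).2)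
    calc f * a * f = ((fS * ⟨a, ha⟩ * fS : F.flagEnd) : Module.End Dᵐᵒᵖ V) := rfl
      _ = ((⟨a, ha⟩ * fS : F.flagEnd) : Module.End Dᵐᵒᵖ V) := by rw [h1]
      _ = a * f := rfl
  have hY0 : LinearMap.range f ≠ ⊥ := fun h0 => hf0 (LinearMap.range_eq_bot.1 h0)
  have hYcomp : ∀ v ∈ LinearMap.range f, ∀ k,
      (DirectSum.decompose 𝒱.comp v k : V) ∈ LinearMap.range f := by
    rintro v ⟨u, rfl⟩ k
    rw [decompose_apply_of_endComp_one 𝒱 hf1]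
    exact LinearMap.mem_range_self _ _
  have hYinv : ∀ a ∈ F.flagEnd, ∀ u ∈ LinearMap.range f, a u ∈ LinearMap.range f := by
    rintro a ha u ⟨z, rfl⟩
    have h1 : a (f z) = (f * (a * f)) z := by
      rw [← mul_assoc, hfinv a ha, Module.End.mul_apply]
    rw [h1]
    exact LinearMap.mem_range_self _ _
  have hV1Y : F.mem 1 ≤ LinearMap.range f :=
    F.first_le_of_invariant hdiv hr hY0 hYcomp hYinv
  have hffix : ∀ w ∈ F.mem 1, f w = w := by
    intro w hw
    obtain ⟨u, rfl⟩ := hV1Y hw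
    have h1 := LinearMap.ext_iff.1 hff u
    rw [Module.End.mul_apply] at h1
    exact h1
  have hfe : f * e = e := by
    apply LinearMap.ext
    intro v
    rw [Module.End.mul_apply]
    exact hffix _ (hfe_mem v)
  have hp'e' : p' * e' = e' := by
    have h1 : fS * eS = eS := Subtype.ext hfe
    have h2 : pS' * ψ eS = ψ eS := by rw [← hψf, ← map_mul ψ fS eS, h1]
    calc p' * e' = ((pS' * ψ eS : F'.flagEnd) : Module.End D'ᵐᵒᵖ V') := rfl
      _ = ((ψ eS : F'.flagEnd) : Module.End D'ᵐᵒᵖ V') := by rw [h2]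
      _ = e' := rfl
  have he'le : LinearMap.range e' ≤ F'.mem 1 := by
    rintro u ⟨z, rfl⟩
    have h1 : e' z = p' (e' z) := by
      conv_lhs => rw [← hp'e']
      rfl
    rw [h1, ← hp'range]
    exact LinearMap.mem_range_self _ _
  exact le_antisymm he'le (le_trans hV1X hXe')
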